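/- For every (u¹, u², u³, u⁴) ∈ ℝ⁴, let S be the space of tuples of reals X^i_j (i, j ∈ {1,2}) and X^i_{jk} (i, j, k ∈ {1,2}, symmetric in j, k) satisfying the system: −2u¹X¹₁ + u¹X²₂ − u²X²₁ + X²₁₁ = 0; −3u¹X¹₂ − u²X¹₁ − 2u³X²₁ − X¹₁₁ + 2X²₁₂ = 0; −2u²X¹₂ − u³X²₂ − 3u⁴X²₁ − 2X¹₁₂ + X²₂₂ = 0; −u³X¹₂ + u⁴X¹₁ − 2u⁴X²₂ − X¹₂₂ = 0. Then S is a 6-dimensional linear subspace, the projection (X^i_j, X^i_{jk}) ↦ (X^i_j) maps S onto all of ℝ⁴, and the elements of S with all X^i_j = 0 are exactly the pairs (0, X^i_{jk}) with (X^i_{jk}) ∈ g². (This is the statement that the isotropy algebra of any point of J⁰π has graded space (L⁰/L¹) ⊕ g² and dimension 6.) -/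
import Mathlib


/- STATEMENT 5: for every (u¹,u²,u³,u⁴) ∈ ℝ⁴, the solution space S of the linear system
   describing the isotropy algebra of a point of J⁰π is 6-dimensional, projects onto all
   first-order components (X^i_j), and its elements with vanishing first-order part are
   exactly the elements of g². -/

/-- The space g² of arrays (X^i_{jk}), symmetric in the lower indices, satisfying
X²₁₁ = 0, X¹₁₁ − 2X²₁₂ = 0, 2X¹₁₂ − X²₂₂ = 0, X¹₂₂ = 0.
(Index value `0` stands for `1`, index value `1` stands for `2`.) -/
def g2 : Submodule ℝ (Fin 2 → Fin 2 → Fin 2 → ℝ) where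
  carrier := {X | (∀ i j k, X i j k = X i k j) ∧
    X 1 0 0 = 0 ∧ X 0 0 0 - 2 * X 1 0 1 = 0 ∧ 2 * X 0 0 1 - X 1 1 1 = 0 ∧ X 0 1 1 = 0}
  add_mem' := by
    rintro X Y ⟨hs, h1, h2, h3, h4⟩ ⟨hs', h1', h2', h3', h4'⟩
    refine ⟨fun i j k => ?_, ?_, ?_, ?_, ?_⟩ <;>
      simp only [Pi.add_apply] <;>
      first
        | rw [hs i j k, hs' i j k]
        | linarith
  zero_mem' := ⟨fun i j k => rfl, by norm_num, by norm_num, by norm_num, by norm_num⟩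
  smul_mem' := by
    rintro c X ⟨hs, h1, h2, h3, h4⟩
    refine ⟨fun i j k => ?_, ?_, ?_, ?_, ?_⟩ <;>
      simp only [Pi.smul_apply, smul_eq_mul] <;>
      first
        | rw [hs i j k]
        | linear_combination c * h1
        | linear_combination c * h2
        | linear_combination c * h3
        | linear_combination c * h4

/-- The space of tuples (X^i_j, X^i_{jk}) (second component symmetric in j, k) satisfying
    −2u¹X¹₁ + u¹X²₂ − u²X²₁ + X²₁₁ = 0;
    −3u¹X¹₂ − u²X¹₁ − 2u³X²₁ − X¹₁₁ + 2X²₁₂ = 0;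
    −2u²X¹₂ − u³X²₂ − 3u⁴X²₁ − 2X¹₁₂ + X²₂₂ = 0;
    −u³X¹₂ + u⁴X¹₁ − 2u⁴X²₂ − X¹₂₂ = 0. -/
def S (u1 u2 u3 u4 : ℝ) :
    Submodule ℝ ((Fin 2 → Fin 2 → ℝ) × (Fin 2 → Fin 2 → Fin 2 → ℝ)) where
  carrier := {X | (∀ i j k, X.2 i j k = X.2 i k j) ∧
    -2*u1*X.1 0 0 + u1*X.1 1 1 - u2*X.1 1 0 + X.2 1 0 0 = 0 ∧
    -3*u1*X.1 0 1 - u2*X.1 0 0 - 2*u3*X.1 1 0 - X.2 0 0 0 + 2*X.2 1 0 1 = 0 ∧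
    -2*u2*X.1 0 1 - u3*X.1 1 1 - 3*u4*X.1 1 0 - 2*X.2 0 0 1 + X.2 1 1 1 = 0 ∧
    -u3*X.1 0 1 + u4*X.1 0 0 - 2*u4*X.1 1 1 - X.2 0 1 1 = 0}
  add_mem' := by
    rintro X Y ⟨hs, h1, h2, h3, h4⟩ ⟨hs', h1', h2', h3', h4'⟩
    refine ⟨fun i j k => ?_, ?_, ?_, ?_, ?_⟩ <;>
      simp only [Prod.fst_add, Prod.snd_add, Pi.add_apply] <;>
      first
        | rw [hs i j k, hs' i j k]
        | linear_combination h1 + h1'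
        | linear_combination h2 + h2'
        | linear_combination h3 + h3'
        | linear_combination h4 + h4'
  zero_mem' := by
    refine ⟨fun i j k => rfl, ?_, ?_, ?_, ?_⟩ <;> simp
  smul_mem' := by
    rintro c X ⟨hs, h1, h2, h3, h4⟩
    refine ⟨fun i j k => ?_, ?_, ?_, ?_, ?_⟩ <;>
      simp only [Prod.smul_fst, Prod.smul_snd, Pi.smul_apply, smul_eq_mul] <;>
      first
        | rw [hs i j k]
        | linear_combination c * h1
        | linear_combination c * h2
        | linear_combination c * h3
        | linear_combination c * h4

section Aux

variable (u1 u2 u3 u4 : ℝ)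

/-- Explicit element of S with prescribed first-order part `A` and free second-order
parameters `a = X¹₁₂`, `b = X²₁₂`. -/
def sol (A : Fin 2 → Fin 2 → ℝ) (a b : ℝ) :
    (Fin 2 → Fin 2 → ℝ) × (Fin 2 → Fin 2 → Fin 2 → ℝ) :=
  (A, ![![![-3*u1*A 0 1 - u2*A 0 0 - 2*u3*A 1 0 + 2*b, a],
          ![a, -u3*A 0 1 + u4*A 0 0 - 2*u4*A 1 1]],
       ![![2*u1*A 0 0 - u1*A 1 1 + u2*A 1 0, b],
          ![b, 2*u2*A 0 1 + u3*A 1 1 + 3*u4*A 1 0 + 2*a]]])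

lemma sol_mem (A : Fin 2 → Fin 2 → ℝ) (a b : ℝ) : sol u1 u2 u3 u4 A a b ∈ S u1 u2 u3 u4 := by
  refine ⟨fun i j k => ?_, ?_, ?_, ?_, ?_⟩ <;>
    simp only [sol, Matrix.cons_val_zero, Matrix.cons_val_one, Matrix.head_cons]
  · fin_cases i <;> fin_cases j <;> fin_cases k <;> simp
  all_goals ring

/-- The projection of the full space onto the six coordinates that freely parametrize S. -/
def proj6 : ((Fin 2 → Fin 2 → ℝ) × (Fin 2 → Fin 2 → Fin 2 → ℝ)) →ₗ[ℝ]
    (Fin 2 → Fin 2 → ℝ) × ℝ × ℝ where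
  toFun p := (p.1, p.2 0 0 1, p.2 1 0 1)
  map_add' p q := rfl
  map_smul' c p := rfl

lemma proj6_bij : Function.Bijective ((proj6).comp (S u1 u2 u3 u4).subtype) := by
  constructor
  · rintro ⟨p, hs, h1, h2, h3, h4⟩ ⟨q, hs', h1', h2', h3', h4'⟩ h
    simp only [LinearMap.comp_apply, proj6, LinearMap.coe_mk, AddHom.coe_mk,
      Submodule.subtype_apply, Prod.mk.injEq] at h
    obtain ⟨hA, ha, hb⟩ := h
    ext1
    refine Prod.ext hA ?_
    have hA' : ∀ i j, p.1 i j = q.1 i j := fun i j => by rw [hA]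
    have e00 := hA' 0 0
    have e01 := hA' 0 1
    have e10 := hA' 1 0
    have e11 := hA' 1 1
    have e000 : p.2 0 0 0 = q.2 0 0 0 := by
      linear_combination -h2 + h2' - 3*u1*e01 - u2*e00 - 2*u3*e10 + 2*hb
    have e011 : p.2 0 1 1 = q.2 0 1 1 := by
      linear_combination -h4 + h4' - u3*e01 + u4*e00 - 2*u4*e11
    have e100 : p.2 1 0 0 = q.2 1 0 0 := by
      linear_combination h1 - h1' + 2*u1*e00 - u1*e11 + u2*e10
    have e111 : p.2 1 1 1 = q.2 1 1 1 := by
      linear_combination h3 - h3' + 2*u2*e01 + u3*e11 + 3*u4*e10 + 2*ha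
    have e010 : p.2 0 1 0 = q.2 0 1 0 := by rw [hs 0 1 0, hs' 0 1 0]; exact ha
    have e110 : p.2 1 1 0 = q.2 1 1 0 := by rw [hs 1 1 0, hs' 1 1 0]; exact hb
    funext i j k
    fin_cases i <;> fin_cases j <;> fin_cases k <;>
      simp only [Fin.zero_eta, Fin.mk_one, Fin.isValue] <;>
      assumption
  · rintro ⟨A, a, b⟩
    refine ⟨⟨sol u1 u2 u3 u4 A a b, sol_mem u1 u2 u3 u4 A a b⟩, ?_⟩
    simp [proj6, sol]

end Aux

/-- S is 6-dimensional, projects onto all of the first-order components, and its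
elements with vanishing first-order part are exactly the pairs (0, Y) with Y ∈ g². -/
theorem stmt5 (u1 u2 u3 u4 : ℝ) :
    Module.finrank ℝ (S u1 u2 u3 u4) = 6 ∧
    (∀ A : Fin 2 → Fin 2 → ℝ, ∃ p ∈ S u1 u2 u3 u4, p.1 = A) ∧
    (∀ Y : Fin 2 → Fin 2 → Fin 2 → ℝ,
      (((0, Y) : (Fin 2 → Fin 2 → ℝ) × (Fin 2 → Fin 2 → Fin 2 → ℝ)) ∈ S u1 u2 u3 u4 ↔
        Y ∈ g2)) := by
  constructor
  · have e : (S u1 u2 u3 u4) ≃ₗ[ℝ] ((Fin 2 → Fin 2 → ℝ) × ℝ × ℝ) :=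
      LinearEquiv.ofBijective _ (proj6_bij u1 u2 u3 u4)
    rw [e.finrank_eq]
    simp [Module.finrank_prod, Module.finrank_pi_fintype]
  constructor
  · intro A
    exact ⟨sol u1 u2 u3 u4 A 0 0, sol_mem u1 u2 u3 u4 A 0 0, rfl⟩
  · intro Y
    constructor
    · rintro ⟨hs, h1, h2, h3, h4⟩
      simp only [Pi.zero_apply] at h1 h2 h3 h4
      exact ⟨hs, by linarith, by linarith, by linarith, by linarith⟩
    · rintro ⟨hs, h1, h2, h3, h4⟩
      exact ⟨hs, by simp; linarith, by simp; linarith, by simp; linarith, by simp; linarith⟩
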